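/- Let A be a DFA over the alphabet Bool with finite state set Q, |Q| = n, such that L(A) ⊆ 𝔇. If w ∈ D and w·v ∈ L(A) for some word v, then writing w = ex(x) with ℓ = |x|, one has ℓ^2 + 3 < n, and consequently |w| = 2ℓ^2 + 4ℓ + 10 ≤ 2·(n − 3) + 4·⌊√(n − 3)⌋ + 10. -/

import Mathlib

/-- The morphism β with β(0)=01, β(1)=10, extended to words. -/
def beta (x : List Bool) : List Bool := x.flatMap (fun b => [b, !b])

/-- The map ex : x ↦ β(x)·11·0^(|x|²+3)·β(x)·11·0^(|x|²+3). -/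
def ex (x : List Bool) : List Bool :=
  beta x ++ [true, true] ++ List.replicate (x.length ^ 2 + 3) false ++
  beta x ++ [true, true] ++ List.replicate (x.length ^ 2 + 3) false

/-- D is the image of ex. -/
def D : Set (List Bool) := Set.range ex

/-- 𝔇 is the set of all extensions of words of D. -/
def Dext : Set (List Bool) := {w | ∃ u ∈ D, ∃ v : List Bool, w = u ++ v}

/-- Length bound for D-prefixes of words of a language contained in 𝔇. -/
lemma beta_cons (b : Bool) (t : List Bool) : beta (b :: t) = b :: (!b) :: beta t := rfl

lemma beta_length (y : List Bool) : (beta y).length = 2 * y.length := by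
  induction y with
  | nil => rfl
  | cons b t ih => simp [beta_cons, ih]; omega

lemma get_even (z rest : List Bool) (k : ℕ) (hk : k < z.length) :
    (beta z ++ rest)[2*k]? = some (z[k]'hk) := by
  induction z generalizing k with
  | nil => simp at hk
  | cons b t ih =>
    cases k with
    | zero => simp [beta_cons]
    | succ k =>
      have h2 : 2 * (k+1) = (2*k) + 1 + 1 := by omega
      rw [h2, beta_cons]
      simpa using ih k (by simpa using hk)

lemma get_odd (z rest : List Bool) (k : ℕ) (hk : k < z.length) :
    (beta z ++ rest)[2*k+1]? = some (!(z[k]'hk)) := by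
  induction z generalizing k with
  | nil => simp at hk
  | cons b t ih =>
    cases k with
    | zero => simp [beta_cons]
    | succ k =>
      have h2 : 2 * (k+1) + 1 = (2*k+1) + 1 + 1 := by omega
      rw [h2, beta_cons]
      simpa using ih k (by simpa using hk)

lemma get_mark0 (z rest : List Bool) :
    (beta z ++ ([true,true] ++ rest))[2*z.length]? = some true := by
  rw [List.getElem?_append_right (by simp [beta_length])]
  simp [beta_length]

lemma get_mark1 (z rest : List Bool) :
    (beta z ++ ([true,true] ++ rest))[2*z.length+1]? = some true := by
  rw [List.getElem?_append_right (by simp [beta_length])]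
  have : 2*z.length + 1 - (beta z).length = 1 := by simp [beta_length]
  rw [this]
  simp

lemma get_zero (z rest : List Bool) (p i : ℕ) (hi : i < p) :
    (beta z ++ ([true,true] ++ (List.replicate p false ++ rest)))[2*z.length+2+i]? = some false := by
  rw [List.getElem?_append_right (by simp [beta_length]; omega)]
  have h1 : 2*z.length+2+i - (beta z).length = i + 1 + 1 := by simp [beta_length]; omega
  rw [h1]
  simp [List.getElem?_append, hi]

lemma pair_ok (z rest : List Bool) :
    ¬((beta z ++ ([true,true] ++ rest))[0]? = some false ∧
      (beta z ++ ([true,true] ++ rest))[1]? = some false) := by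
  rintro ⟨h0, h1⟩
  cases z with
  | nil => simp [beta] at h0
  | cons b t =>
    rw [beta_cons] at h0 h1
    simp at h0 h1
    rw [h0] at h1
    simp at h1

lemma ex_second (y v' : List Bool) (j : ℕ) :
    (ex y ++ v')[2*y.length+2+(y.length^2+3)+j]? =
    (beta y ++ ([true,true] ++ (List.replicate (y.length^2+3) false ++ v')))[j]? := by
  have he : ex y ++ v' =
      (beta y ++ [true,true] ++ List.replicate (y.length^2+3) false) ++
      (beta y ++ ([true,true] ++ (List.replicate (y.length^2+3) false ++ v'))) := by
    simp [ex, List.append_assoc]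
  rw [he, List.getElem?_append_right (by simp [beta_length]; omega)]
  congr 1
  simp [beta_length]
  omega

lemma ex_front (y v' : List Bool) :
    ex y ++ v' = beta y ++ ([true,true] ++ (List.replicate (y.length^2+3) false ++
      (beta y ++ ([true,true] ++ (List.replicate (y.length^2+3) false ++ v'))))) := by
  simp [ex, List.append_assoc]

theorem stmt_11 (Q : Type) [Fintype Q] (A : DFA Bool Q) (n : ℕ)
    (hn : n = Fintype.card Q)
    (hL : ∀ w ∈ A.accepts, w ∈ Dext)
    (x : List Bool) (v : List Bool) (hv : ex x ++ v ∈ A.accepts) :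
    x.length ^ 2 + 3 < n ∧
      (ex x).length = 2 * x.length ^ 2 + 4 * x.length + 10 ∧
      (ex x).length ≤ 2 * (n - 3) + 4 * Nat.sqrt (n - 3) + 10 := by
  have hlen_ex : (ex x).length = 2 * x.length ^ 2 + 4 * x.length + 10 := by
    simp [ex, beta_length]; ring
  have key : x.length ^ 2 + 3 < n := by
    by_contra hc
    push_neg at hc
    rw [hn] at hc
    set ℓ := x.length with hℓ
    set m := ℓ ^ 2 + 3 with hm
    set R : List Bool := beta x ++ ([true,true] ++ (List.replicate m false ++ v)) with hR
    set P : List Bool := beta x ++ [true, true] with hP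
    have hvPR : ex x ++ v = P ++ (List.replicate m false ++ R) := by
      simp [ex, P, R, List.append_assoc]
      rfl
    set s1 := A.evalFrom A.start P with hs1
    obtain ⟨q, a, b, c, hx_eq, _, hbne, hqa, hqb, hqc⟩ :=
      A.evalFrom_split (s := s1) (t := A.evalFrom s1 (List.replicate m false))
        (x := List.replicate m false) (by simpa using hc) rfl
    -- all pieces consist of falses
    have hall : ∀ e ∈ a ++ b ++ c, e = false := by
      intro e he
      rw [← hx_eq] at he
      exact List.eq_of_mem_replicate he
    have fa : ∀ l : List Bool, (∀ e ∈ l, e = false) → l = List.replicate l.length false := by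
      intro l h
      exact List.eq_replicate_iff.mpr ⟨rfl, h⟩
    have ha' := fa a (fun e he => hall e (by simp [he]))
    have hb' := fa b (fun e he => hall e (by simp [he]))
    have hc' := fa c (fun e he => hall e (by simp [he]))
    have hmlen : a.length + b.length + c.length = m := by
      have := congrArg List.length hx_eq
      simp at this
      omega
    set N := m + 2 * b.length with hN
    have hrep : a ++ (b ++ (b ++ (b ++ c))) = List.replicate N false := by
      conv_lhs => rw [ha', hb', hc']
      simp only [List.replicate_append_replicate]
      congr 1
      omega
    set w' : List Bool := P ++ ((a ++ (b ++ (b ++ (b ++ c)))) ++ R) with hw'def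
    have hacc : w' ∈ A.accepts := by
      rw [DFA.mem_accepts] at hv ⊢
      rw [hvPR] at hv
      simp only [DFA.eval] at hv ⊢
      rw [hw'def]
      rw [DFA.evalFrom_of_append, DFA.evalFrom_of_append] at hv ⊢
      rw [← hs1] at hv ⊢
      have hmid : A.evalFrom s1 (a ++ (b ++ (b ++ (b ++ c)))) =
          A.evalFrom s1 (List.replicate m false) := by
        conv_rhs => rw [hx_eq]
        simp [DFA.evalFrom_of_append, hqa, hqb]
      rw [hmid]
      exact hv
    obtain ⟨u0, ⟨y, hy⟩, v', hwy⟩ := hL w' hacc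
    rw [← hy] at hwy
    -- normalized form of w'
    have w'eq : w' = beta x ++ ([true,true] ++ (List.replicate N false ++ R)) := by
      rw [hw'def, hrep]
      simp [P, List.append_assoc]
    set ly := y.length with hly
    set p' := ly ^ 2 + 3 with hp'
    have hbpos : 1 ≤ b.length := by
      cases b with
      | nil => exact absurd rfl hbne
      | cons _ _ => simp
    -- facts about w'
    have W2a : w'[2*ℓ]? = some true := by
      rw [w'eq]; exact get_mark0 x (List.replicate N false ++ R)
    have W2b : w'[2*ℓ+1]? = some true := by
      rw [w'eq]; exact get_mark1 x (List.replicate N false ++ R)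
    have W3 : ∀ i, i < N → w'[2*ℓ+2+i]? = some false := by
      intro i hi
      rw [w'eq]; exact get_zero x R N i hi
    -- facts about ex y ++ v'
    have exfront := ex_front y v'
    rcases lt_trichotomy ly ℓ with hlt | heq | hgt
    · -- ly < ℓ : zeros of ex y hit the beta/mark region of w'
      have f0 : w'[2*ly+2]? = some false := by
        rw [hwy, exfront]
        simpa using get_zero y _ p' 0 (by omega)
      have f1 : w'[2*ly+2+1]? = some false := by
        rw [hwy, exfront]
        exact get_zero y _ p' 1 (by omega)
      rcases eq_or_lt_of_le (Nat.succ_le_of_lt hlt) with hk | hk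
      · -- ly + 1 = ℓ
        have h2 : 2*ly+2 = 2*ℓ := by omega
        rw [h2, W2a] at f0
        simp at f0
      · -- ly + 1 < ℓ
        have hklt : ly + 1 < ℓ := hk
        have e1 : w'[2*(ly+1)]? = some (x[ly+1]'(by omega)) := by
          rw [w'eq]; exact get_even x _ (ly+1) (by omega)
        have e2 : w'[2*(ly+1)+1]? = some (!(x[ly+1]'(by omega))) := by
          rw [w'eq]; exact get_odd x _ (ly+1) (by omega)
        have h2 : 2*(ly+1) = 2*ly+2 := by omega
        rw [h2] at e1 e2
        rw [f0] at e1
        rw [f1] at e2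
        simp at e1 e2
        rw [e1] at e2
        simp at e2
    · -- ly = ℓ : second block start of ex y sits inside pumped zeros of w'
      have hpm : p' = m := by rw [hp', heq]
      have g0 : w'[2*ly+2+p'+0]? =
          (beta y ++ ([true,true] ++ (List.replicate p' false ++ v')))[0]? := by
        rw [hwy]; exact ex_second y v' 0
      have g1 : w'[2*ly+2+p'+1]? =
          (beta y ++ ([true,true] ++ (List.replicate p' false ++ v')))[1]? := by
        rw [hwy]; exact ex_second y v' 1
      have z0 : w'[2*ly+2+p'+0]? = some false := by
        have h2 : 2*ly+2+p'+0 = 2*ℓ+2+m := by omega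
        rw [h2]; exact W3 m (by omega)
      have z1 : w'[2*ly+2+p'+1]? = some false := by
        have h2 : 2*ly+2+p'+1 = 2*ℓ+2+(m+1) := by omega
        rw [h2]; exact W3 (m+1) (by omega)
      exact pair_ok y _ ⟨by rw [← g0, z0], by rw [← g1, z1]⟩
    · -- ℓ < ly : marks of w' hit the beta region of ex y
      have e1 : w'[2*ℓ]? = some (y[ℓ]'(by omega)) := by
        rw [hwy, exfront]; exact get_even y _ ℓ (by omega)
      have e2 : w'[2*ℓ+1]? = some (!(y[ℓ]'(by omega))) := by
        rw [hwy, exfront]; exact get_odd y _ ℓ (by omega)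
      rw [W2a] at e1
      rw [W2b] at e2
      simp at e1 e2
      rw [e2] at e1
      simp at e1
  refine ⟨key, hlen_ex, ?_⟩
  have h1 : x.length ^ 2 ≤ n - 3 := le_tsub_of_add_le_right key.le
  have h2 : x.length ≤ Nat.sqrt (n - 3) := Nat.le_sqrt.mpr (by rw [← pow_two]; exact h1)
  rw [hlen_ex]
  gcongr
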